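/- For the ODDM basis φ_i[n] = (1/√N)·e^{(2πi/N)·⌊i/M⌋·⌊n/M⌋}·1{n ≡ i (mod M)} on Z_{MN}, and for any k₁, k₂ ∈ {0,…,M−1}, l₁, l₂ ∈ {0,…,N−1}, the quantity S_i = ∑_{n=0}^{MN−1} φ_i[(n−k₂) mod MN]·conj(φ_i[(n−k₁) mod MN])·e^{(2πi/(MN))·(l₂−l₁)·n} does not depend on the carrier index i ∈ {0,…,MN−1}. -/

import Mathlib

open Complex Finset

/-- The ODDM basis element on `Z_{MN}`. -/
noncomputable def oddmBasis (M N : ℕ) (i n : ℕ) : ℂ :=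
  if n % M = i % M then
    (1 / Real.sqrt N) *
      Complex.exp (2 * Real.pi * Complex.I * ((i / M : ℕ) * (n / M : ℕ) : ℕ) / N)
  else 0

/-- The non-selectivity sum `S_i` for the ODDM basis, with delay shifts
`k₁, k₂` and Doppler shifts `l₁, l₂` (`(n − k) mod MN` realized as
`(n + MN − k) % (MN)` for `k < M ≤ MN`). -/
noncomputable def oddmSum (M N : ℕ) (k₁ k₂ l₁ l₂ : ℕ) (i : ℕ) : ℂ :=
  ∑ n ∈ Finset.range (M * N),
    oddmBasis M N i ((n + M * N - k₂) % (M * N)) *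
      (starRingEnd ℂ) (oddmBasis M N i ((n + M * N - k₁) % (M * N))) *
      Complex.exp (2 * Real.pi * Complex.I * ((l₂ : ℤ) - (l₁ : ℤ)) * n / (M * N))

/-- Geometric-sum lemma: for a nonzero integer frequency `Δ` with `|Δ| < N`,
the `N`-point exponential sum vanishes. -/
lemma oddm_geom_zero (N : ℕ) (hN : 0 < N) (Δ : ℤ) (hΔ : Δ ≠ 0) (hΔN : Δ.natAbs < N) :
    ∑ r ∈ Finset.range N,
      Complex.exp (2 * Real.pi * Complex.I * (Δ : ℂ) * (r : ℂ) / (N : ℂ)) = 0 := by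
  have hN0 : (N : ℂ) ≠ 0 := Nat.cast_ne_zero.mpr hN.ne'
  set z : ℂ := Complex.exp (2 * Real.pi * Complex.I * (Δ : ℂ) / (N : ℂ)) with hz
  have hzpow : ∀ r : ℕ,
      Complex.exp (2 * Real.pi * Complex.I * (Δ : ℂ) * (r : ℂ) / (N : ℂ)) = z ^ r := by
    intro r
    rw [hz, ← Complex.exp_nat_mul]
    congr 1
    ring
  have hz1 : z ≠ 1 := by
    intro h
    rw [hz, Complex.exp_eq_one_iff] at h
    obtain ⟨m, hm⟩ := h
    have hpi : (Real.pi : ℂ) ≠ 0 := Complex.ofReal_ne_zero.mpr Real.pi_ne_zero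
    have hI : Complex.I ≠ 0 := Complex.I_ne_zero
    have hΔeq : (Δ : ℂ) = (m : ℂ) * (N : ℂ) := by
      field_simp at hm
      have h2 : (2 * (Real.pi : ℂ) * Complex.I) * (Δ : ℂ)
          = (2 * (Real.pi : ℂ) * Complex.I) * ((m : ℂ) * (N : ℂ)) := by
        linear_combination (2 * (Real.pi : ℂ) * Complex.I) * hm
      exact mul_left_cancel₀ (mul_ne_zero (mul_ne_zero two_ne_zero hpi) hI) h2
    have hΔeq' : Δ = m * N := by exact_mod_cast hΔeq
    have hm0 : m ≠ 0 := by
      rintro rfl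
      simp at hΔeq'
      exact hΔ hΔeq'
    have h1 : (N : ℤ) ≤ |Δ| := by
      rw [hΔeq', abs_mul]
      calc (N : ℤ) = 1 * (N : ℤ) := (one_mul _).symm
        _ ≤ |m| * |(N : ℤ)| := by
            apply mul_le_mul (Int.one_le_abs hm0) (le_abs_self _) (by positivity)
              (abs_nonneg _)
    have h2 : |Δ| < (N : ℤ) := by
      rw [Int.abs_eq_natAbs]
      exact_mod_cast hΔN
    omega
  have hzN : z ^ N = 1 := by
    rw [hz, ← Complex.exp_nat_mul]
    have : (N : ℂ) * (2 * Real.pi * Complex.I * (Δ : ℂ) / (N : ℂ))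
        = (Δ : ℂ) * (2 * Real.pi * Complex.I) := by
      field_simp
    rw [this, Complex.exp_int_mul_two_pi_mul_I]
  calc ∑ r ∈ Finset.range N,
        Complex.exp (2 * Real.pi * Complex.I * (Δ : ℂ) * (r : ℂ) / (N : ℂ))
      = ∑ r ∈ Finset.range N, z ^ r := Finset.sum_congr rfl fun r _ => hzpow r
    _ = (z ^ N - 1) / (z - 1) := geom_sum_eq hz1 N
    _ = 0 := by rw [hzN]; simp

/-- The inner exponential sum over one residue class. -/
lemma oddm_inner_sum (M N : ℕ) (hM : 0 < M) (hN : 0 < N) (l₁ l₂ : ℕ)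
    (hl₁ : l₁ < N) (hl₂ : l₂ < N) (c : ℕ) :
    ∑ r ∈ Finset.range N,
      Complex.exp (2 * Real.pi * Complex.I * (((l₂ : ℤ) : ℂ) - ((l₁ : ℤ) : ℂ)) *
        ((M * r + c : ℕ) : ℂ) / ((M : ℂ) * (N : ℂ)))
      = if l₁ = l₂ then (N : ℂ) else 0 := by
  by_cases hl : l₁ = l₂
  · subst hl
    simp
  · rw [if_neg hl]
    have hM0 : (M : ℂ) ≠ 0 := Nat.cast_ne_zero.mpr hM.ne'
    have hN0 : (N : ℂ) ≠ 0 := Nat.cast_ne_zero.mpr hN.ne'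
    have key : ∀ r : ℕ,
        Complex.exp (2 * Real.pi * Complex.I * (((l₂ : ℤ) : ℂ) - ((l₁ : ℤ) : ℂ)) *
          ((M * r + c : ℕ) : ℂ) / ((M : ℂ) * (N : ℂ)))
        = Complex.exp (2 * Real.pi * Complex.I * (((l₂ : ℤ) - (l₁ : ℤ) : ℤ) : ℂ) * (c : ℂ) /
              ((M : ℂ) * (N : ℂ))) *
          Complex.exp (2 * Real.pi * Complex.I * (((l₂ : ℤ) - (l₁ : ℤ) : ℤ) : ℂ) * (r : ℂ) /
              (N : ℂ)) := by
      intro r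
      rw [← Complex.exp_add]
      congr 1
      push_cast
      field_simp
      ring
    rw [Finset.sum_congr rfl fun r _ => key r, ← Finset.mul_sum]
    rw [oddm_geom_zero N hN ((l₂ : ℤ) - (l₁ : ℤ)) (by omega) (by omega), mul_zero]

/-- Modulus-one cancellation: `z * conj z = a²` for `z = a·exp θ` with `a` real
and `θ` purely imaginary. -/
lemma oddm_conj_cancel (a θ : ℂ) (ha : (starRingEnd ℂ) a = a)
    (hθ : (starRingEnd ℂ) θ = -θ) :
    (a * Complex.exp θ) * (starRingEnd ℂ) (a * Complex.exp θ) = a * a := by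
  rw [map_mul, ← Complex.exp_conj, hθ, ha, mul_mul_mul_comm, ← Complex.exp_add,
    add_neg_cancel, Complex.exp_zero, mul_one]

/-- Closed form of the non-selectivity sum: it equals `1` iff `k₁ = k₂` and
`l₁ = l₂`, and `0` otherwise — in particular it does not depend on `i`. -/
lemma oddmSum_eq (M N : ℕ) (hM : 2 ≤ M) (hN : 0 < N)
    (k₁ k₂ l₁ l₂ : ℕ) (hk₁ : k₁ < M) (hk₂ : k₂ < M) (hl₁ : l₁ < N) (hl₂ : l₂ < N) (i : ℕ) :
    oddmSum M N k₁ k₂ l₁ l₂ i = if k₁ = k₂ ∧ l₁ = l₂ then 1 else 0 := by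
  have hM0 : 0 < M := by omega
  have hMN : M ≤ M * N := Nat.le_mul_of_pos_right M hN
  have hdvd : M ∣ M * N := dvd_mul_right M N
  by_cases hkk : k₁ = k₂
  · subst hkk
    have hN0 : (N : ℂ) ≠ 0 := Nat.cast_ne_zero.mpr hN.ne'
    have hsub : ∀ n : ℕ, (n + M * N - k₁) + k₁ = n + M * N := fun n => by omega
    have hcond : ∀ n : ℕ, ((n + M * N - k₁) % M = i % M) ↔ (n % M = (i + k₁) % M) := by
      intro n
      constructor
      · intro h
        have h' : (n + M * N - k₁) + k₁ ≡ i + k₁ [MOD M] := Nat.ModEq.add_right k₁ h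
        rw [hsub n] at h'
        calc n % M = (n + M * N) % M := (Nat.add_mul_mod_self_left n M N).symm
          _ = (i + k₁) % M := h'
      · intro h
        apply Nat.ModEq.add_right_cancel' k₁
        rw [hsub n]
        calc (n + M * N) % M = n % M := Nat.add_mul_mod_self_left n M N
          _ = (i + k₁) % M := h
    have step : oddmSum M N k₁ k₁ l₁ l₂ i
        = ∑ n ∈ Finset.range (M * N),
            (if n % M = (i + k₁) % M then ((N : ℂ))⁻¹ else 0) *
            Complex.exp (2 * Real.pi * Complex.I * ((l₂ : ℤ) - (l₁ : ℤ)) * n / (M * N)) := by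
      rw [oddmSum]
      refine Finset.sum_congr rfl fun n hn => ?_
      congr 1
      have hmm : ((n + M * N - k₁) % (M * N)) % M = (n + M * N - k₁) % M :=
        Nat.mod_mod_of_dvd _ hdvd
      by_cases h : n % M = (i + k₁) % M
      · rw [if_pos h]
        have hc : ((n + M * N - k₁) % (M * N)) % M = i % M := by
          rw [hmm]; exact (hcond n).mpr h
        simp only [oddmBasis, if_pos hc]
        rw [oddm_conj_cancel _ _ (by simp) (by
            simp only [map_div₀, map_mul, map_ofNat, Complex.conj_ofReal, Complex.conj_I,
              map_natCast]
            ring)]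
        rw [div_mul_div_comm, one_mul, ← Complex.ofReal_mul,
          Real.mul_self_sqrt (Nat.cast_nonneg N)]
        rw [one_div, ← Complex.ofReal_natCast, ← Complex.ofReal_inv]
      · rw [if_neg h]
        have hc : ¬ ((n + M * N - k₁) % (M * N)) % M = i % M := by
          rw [hmm]; exact fun hh => h ((hcond n).mp hh)
        simp only [oddmBasis, if_neg hc, map_zero, mul_zero, zero_mul]
    rw [step]
    simp only [ite_mul, zero_mul]
    rw [← Finset.sum_filter]
    set c := (i + k₁) % M with hcdef
    have hcM : c < M := Nat.mod_lt _ hM0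
    have hbij : ∑ n ∈ (Finset.range (M * N)).filter (fun n => n % M = c),
        ((N : ℂ))⁻¹ *
          Complex.exp (2 * Real.pi * Complex.I * ((l₂ : ℤ) - (l₁ : ℤ)) * n / (M * N))
        = ∑ r ∈ Finset.range N,
        ((N : ℂ))⁻¹ *
          Complex.exp (2 * Real.pi * Complex.I * ((l₂ : ℤ) - (l₁ : ℤ)) *
            ((M * r + c : ℕ) : ℂ) / (M * N)) := by
      refine Finset.sum_nbij' (fun n => n / M) (fun r => M * r + c) ?_ ?_ ?_ ?_ ?_
      · intro a ha
        simp only [Finset.mem_filter, Finset.mem_range] at ha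
        simp only [Finset.mem_range]
        exact Nat.div_lt_of_lt_mul ha.1
      · intro r hr
        simp only [Finset.mem_range] at hr
        simp only [Finset.mem_filter, Finset.mem_range]
        refine ⟨?_, ?_⟩
        · calc M * r + c < M * r + M := by omega
            _ = M * (r + 1) := by ring
            _ ≤ M * N := Nat.mul_le_mul_left M hr
        · rw [Nat.mul_add_mod]
          exact Nat.mod_eq_of_lt hcM
      · intro a ha
        simp only [Finset.mem_filter, Finset.mem_range] at ha
        show M * (a / M) + c = a
        have := Nat.div_add_mod a M
        omega
      · intro r hr
        show (M * r + c) / M = r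
        rw [Nat.mul_add_div hM0, Nat.div_eq_of_lt hcM, add_zero]
      · intro a ha
        simp only [Finset.mem_filter, Finset.mem_range] at ha
        have hra : M * (a / M) + c = a := by
          have := Nat.div_add_mod a M
          omega
        rw [hra]
    rw [hbij, ← Finset.mul_sum,
      oddm_inner_sum M N hM0 hN l₁ l₂ hl₁ hl₂ c]
    by_cases hl : l₁ = l₂
    · simp [hl, inv_mul_cancel₀ hN0]
    · simp [hl]
  · -- cross terms vanish
    rw [if_neg (by tauto)]
    apply Finset.sum_eq_zero
    intro n _
    by_cases h2 : ((n + M * N - k₂) % (M * N)) % M = i % M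
    · by_cases h1 : ((n + M * N - k₁) % (M * N)) % M = i % M
      · exfalso
        rw [Nat.mod_mod_of_dvd _ hdvd] at h1 h2
        have h : (n + M * N - k₂) ≡ (n + M * N - k₁) [MOD M] := h2.trans h1.symm
        have e2 : (n + M * N - k₂) + k₂ = n + M * N := by omega
        have e1 : (n + M * N - k₁) + k₁ = n + M * N := by omega
        have h' : (n + M * N - k₂) + (k₂ + k₁) ≡ (n + M * N - k₁) + (k₂ + k₁) [MOD M] :=
          h.add_right _
        have h'' : (n + M * N) + k₁ ≡ (n + M * N) + k₂ [MOD M] := by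
          calc (n + M * N) + k₁ = (n + M * N - k₂) + (k₂ + k₁) := by omega
            _ ≡ (n + M * N - k₁) + (k₂ + k₁) [MOD M] := h'
            _ = (n + M * N) + k₂ := by omega
        have hk : k₁ ≡ k₂ [MOD M] := Nat.ModEq.add_left_cancel' _ h''
        have : k₁ % M = k₂ % M := hk
        rw [Nat.mod_eq_of_lt hk₁, Nat.mod_eq_of_lt hk₂] at this
        exact hkk this
      · simp only [oddmBasis, if_neg h1, map_zero, mul_zero, zero_mul]
    · simp only [oddmBasis, if_neg h2, map_zero, mul_zero, zero_mul]

/-- Non-selectivity of ODDM: the sum `S_i` does not depend on the carrier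
index `i`. -/
theorem oddm_nonselective (M N : ℕ) (hM : 2 ≤ M) (hN : 0 < N)
    (k₁ k₂ l₁ l₂ : ℕ) (hk₁ : k₁ < M) (hk₂ : k₂ < M) (hl₁ : l₁ < N) (hl₂ : l₂ < N) :
    ∀ i j, i < M * N → j < M * N →
      oddmSum M N k₁ k₂ l₁ l₂ i = oddmSum M N k₁ k₂ l₁ l₂ j := by
  intro i j _ _
  rw [oddmSum_eq M N hM hN k₁ k₂ l₁ l₂ hk₁ hk₂ hl₁ hl₂ i,
    oddmSum_eq M N hM hN k₁ k₂ l₁ l₂ hk₁ hk₂ hl₁ hl₂ j]
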